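/- arXiv:2602.11029 — 7 statements merged into one kernel-verified Lean document; each statement's English description precedes it below -/
import Mathlib

section
/- Let π be a permutation of {0,…,n−1} and S the set of run starts of π (positions i with i=0 or π(i−1)+1 ≠ π(i)). Then the set S_π = {π(i) : i ∈ S} also has cardinality |S|, and the images of the runs of π, namely the intervals [π(s), π(s) + ℓ_s) where ℓ_s is the length of the run starting at s, are pairwise disjoint and partition {0,…,n−1}. -/
/-- The set of run starts of the permutation `π` of `{0,…,n-1}`. -/
def runStarts (n : ℕ) (π : ℕ → ℕ) : Finset ℕ :=
  (Finset.range n).filter (fun i => i = 0 ∨ π (i - 1) + 1 ≠ π i)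

/-- Length of the run starting at `s`: distance to the next run start (or to `n`). -/
noncomputable def runLen (n : ℕ) (S : Finset ℕ) (s : ℕ) : ℕ :=
  sInf ({t : ℕ | t ∈ S ∧ s < t} ∪ {n}) - s

namespace Stmt2Aux

variable (n : ℕ) (π : ℕ → ℕ)

/-- next run start after `s` (or `n`). -/
noncomputable def nxt (s : ℕ) : ℕ := sInf ({t : ℕ | t ∈ runStarts n π ∧ s < t} ∪ {n})

lemma runLen_eq (s : ℕ) : runLen n (runStarts n π) s = nxt n π s - s := rfl

lemma mem_runStarts {i : ℕ} :
    i ∈ runStarts n π ↔ i < n ∧ (i = 0 ∨ π (i - 1) + 1 ≠ π i) := by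
  simp [runStarts]

lemma nxt_mem (s : ℕ) :
    nxt n π s ∈ ({t : ℕ | t ∈ runStarts n π ∧ s < t} ∪ {n} : Set ℕ) :=
  Nat.sInf_mem ⟨n, Or.inr rfl⟩

lemma nxt_le (s t : ℕ) (h : t ∈ runStarts n π) (hst : s < t) : nxt n π s ≤ t :=
  Nat.sInf_le (Or.inl ⟨h, hst⟩)

lemma nxt_le_n (s : ℕ) : nxt n π s ≤ n := Nat.sInf_le (Or.inr rfl)

lemma lt_nxt (s : ℕ) (hs : s < n) : s < nxt n π s := by
  rcases nxt_mem n π s with ⟨_, h⟩ | h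
  · exact h
  · simp only [Set.mem_singleton_iff] at h; omega

lemma not_start_of_between {s j : ℕ} (h1 : s < j) (h2 : j < nxt n π s) :
    j ∉ runStarts n π := fun hj => absurd (nxt_le n π s j hj h1) (by omega)

lemma run_eq {s : ℕ} (hs : s ∈ runStarts n π) :
    ∀ i, s ≤ i → i < nxt n π s → π i = π s + (i - s) := by
  intro i
  induction i with
  | zero => intro h1 _; interval_cases s; simp
  | succ j ih =>
    intro h1 h2
    rcases Nat.eq_or_lt_of_le h1 with h | h
    · simp [← h]
    · have hsj : s ≤ j := by omega
      have hj2 : j < nxt n π s := by omega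
      have hjn : j + 1 < n := lt_of_lt_of_le h2 (nxt_le_n n π s)
      have hns : j + 1 ∉ runStarts n π := not_start_of_between n π (by omega) h2
      rw [mem_runStarts] at hns
      push_neg at hns
      have := (hns hjn).2
      simp only [Nat.add_sub_cancel] at this
      rw [← this, ih hsj hj2]
      omega

lemma image_run {s : ℕ} (hs : s ∈ runStarts n π) :
    (Finset.Ico s (nxt n π s)).image π = Finset.Ico (π s) (π s + (nxt n π s - s)) := by
  ext a
  simp only [Finset.mem_image, Finset.mem_Ico]
  constructor
  · rintro ⟨i, ⟨h1, h2⟩, rfl⟩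
    rw [run_eq n π hs i h1 h2]; omega
  · rintro ⟨h1, h2⟩
    refine ⟨s + (a - π s), ⟨by omega, by omega⟩, ?_⟩
    rw [run_eq n π hs _ (by omega) (by omega)]
    omega

lemma partition : (runStarts n π).biUnion (fun s => Finset.Ico s (nxt n π s)) =
    Finset.range n := by
  ext i
  simp only [Finset.mem_biUnion, Finset.mem_Ico, Finset.mem_range]
  constructor
  · rintro ⟨s, hs, _, h2⟩
    exact lt_of_lt_of_le h2 (nxt_le_n n π s)
  · intro hi
    have h0 : 0 ∈ runStarts n π := by rw [mem_runStarts]; exact ⟨by omega, Or.inl rfl⟩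
    set F := (runStarts n π).filter (· ≤ i) with hF
    have hne : F.Nonempty := ⟨0, by simp [hF, h0]⟩
    set s := F.max' hne with hsdef
    have hsF : s ∈ F := F.max'_mem hne
    have hsS : s ∈ runStarts n π := (Finset.mem_filter.mp hsF).1
    have hsi : s ≤ i := by simpa using (Finset.mem_filter.mp hsF).2
    refine ⟨s, hsS, hsi, ?_⟩
    by_contra h
    push_neg at h
    rcases nxt_mem n π s with ⟨hmem, hlt⟩ | hmem
    · have : nxt n π s ∈ F := Finset.mem_filter.mpr ⟨hmem, by simpa using h⟩
      have := F.le_max' _ this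
      omega
    · simp only [Set.mem_singleton_iff] at hmem; omega

lemma input_disjoint {s t : ℕ} (hs : s ∈ runStarts n π) (ht : t ∈ runStarts n π)
    (hne : s ≠ t) : Disjoint (Finset.Ico s (nxt n π s)) (Finset.Ico t (nxt n π t)) := by
  rw [Finset.disjoint_left]
  rintro a ha hb
  simp only [Finset.mem_Ico] at ha hb
  rcases lt_or_gt_of_ne hne with h | h
  · have := nxt_le n π s t ht h; omega
  · have := nxt_le n π t s hs h; omega

end Stmt2Aux

open Stmt2Aux in
/-- `S_π = π(S)` has cardinality `|S|`, and the output intervals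
`[π s, π s + ℓ_s)` are pairwise disjoint and partition `{0,…,n-1}`. -/
theorem statement_2 (n : ℕ) (hn : 0 < n) (π : ℕ → ℕ)
    (hπ : Set.BijOn π (Set.Iio n) (Set.Iio n)) :
    ((runStarts n π).image π).card = (runStarts n π).card ∧
    (↑(runStarts n π) : Set ℕ).PairwiseDisjoint
      (fun s => Finset.Ico (π s) (π s + runLen n (runStarts n π) s)) ∧
    (runStarts n π).biUnion
      (fun s => Finset.Ico (π s) (π s + runLen n (runStarts n π) s)) = Finset.range n := by
  have hinj : Set.InjOn π (Set.Iio n) := hπ.injOn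
  have hsub : (↑(runStarts n π) : Set ℕ) ⊆ Set.Iio n := by
    intro x hx
    simp only [Finset.mem_coe, mem_runStarts] at hx
    exact hx.1
  have hout : ∀ s ∈ runStarts n π,
      Finset.Ico (π s) (π s + runLen n (runStarts n π) s) =
        (Finset.Ico s (nxt n π s)).image π := by
    intro s hs
    rw [runLen_eq, image_run n π hs]
  refine ⟨Finset.card_image_of_injOn (hinj.mono hsub), ?_, ?_⟩
  · intro s hs t ht hne
    simp only [Finset.mem_coe] at hs ht
    simp only [Function.onFun]
    rw [hout s hs, hout t ht, Finset.disjoint_left]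
    rintro a ha hb
    simp only [Finset.mem_image, Finset.mem_Ico] at ha hb
    obtain ⟨i, hi, rfl⟩ := ha
    obtain ⟨j, hj, hij⟩ := hb
    have hin : i < n := lt_of_lt_of_le hi.2 (nxt_le_n n π s)
    have hjn : j < n := lt_of_lt_of_le hj.2 (nxt_le_n n π t)
    have : j = i := hinj hjn hin hij
    subst this
    exact Finset.disjoint_left.mp (input_disjoint n π hs ht hne)
      (Finset.mem_Ico.mpr hi) (Finset.mem_Ico.mpr hj)
  · have : (runStarts n π).biUnion
        (fun s => Finset.Ico (π s) (π s + runLen n (runStarts n π) s)) =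
        ((runStarts n π).biUnion (fun s => Finset.Ico s (nxt n π s))).image π := by
      rw [Finset.biUnion_image]
      exact Finset.biUnion_congr rfl hout
    rw [this, partition n π]
    apply Finset.coe_injective
    rw [Finset.coe_image, Finset.coe_range]
    exact hπ.image_eq
end

section
/- Let π be a permutation of {0,…,n−1} whose run starts form a set S' of size r', with every run of length at most L. For an index j, define F(j) as the number of elements of S' lying in the half-open output interval of run j (the image under π of run j). Then the sum over all runs j of F(j) is at most r', and consequently the total number of fast forwards over all n distinct move queries is at most L · r'. -/
/-- Predecessor of `i` among the run starts `S`. -/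
noncomputable def predIn (S : Finset ℕ) (i : ℕ) : ℕ :=
  sSup {s : ℕ | s ∈ S ∧ s ≤ i}

/-- `F j`: number of run starts lying in the output interval of the run starting at `s`. -/
noncomputable def ffCount (n : ℕ) (π : ℕ → ℕ) (S : Finset ℕ) (s : ℕ) : ℕ :=
  (S.filter (fun t => π s ≤ t ∧ t < π s + runLen n S s)).card

namespace St3Aux

/-- The next run start (or `n`). -/
noncomputable def nxt (n : ℕ) (S : Finset ℕ) (s : ℕ) : ℕ :=
  sInf ({t : ℕ | t ∈ S ∧ s < t} ∪ {n})

lemma runLen_eq (n : ℕ) (S : Finset ℕ) (s : ℕ) : runLen n S s = nxt n S s - s := rfl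

lemma nxt_mem (n : ℕ) (S : Finset ℕ) (s : ℕ) :
    nxt n S s ∈ ({t : ℕ | t ∈ S ∧ s < t} ∪ {n} : Set ℕ) :=
  Nat.sInf_mem ⟨n, Or.inr rfl⟩

lemma nxt_gt {n : ℕ} (S : Finset ℕ) {s : ℕ} (hs : s < n) : s < nxt n S s := by
  rcases nxt_mem n S s with h | h
  · exact h.2
  · simp only [Set.mem_singleton_iff] at h; omega

lemma nxt_le_n (n : ℕ) (S : Finset ℕ) (s : ℕ) : nxt n S s ≤ n :=
  Nat.sInf_le (Or.inr rfl)

lemma nxt_le_of_mem {n : ℕ} {S : Finset ℕ} {s t : ℕ} (ht : t ∈ S) (hst : s < t) :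
    nxt n S s ≤ t :=
  Nat.sInf_le (Or.inl ⟨ht, hst⟩)

lemma mem_runStarts_lt {n : ℕ} {π : ℕ → ℕ} {s : ℕ} (hs : s ∈ runStarts n π) : s < n := by
  simp only [runStarts, Finset.mem_filter, Finset.mem_range] at hs
  exact hs.1

lemma zero_mem (n : ℕ) (π : ℕ → ℕ) (hn : 0 < n) : 0 ∈ runStarts n π := by
  simp [runStarts, Finset.mem_filter, Finset.mem_range, hn]

lemma pi_run {n : ℕ} {π : ℕ → ℕ} {s : ℕ} (hs : s ∈ runStarts n π) :
    ∀ k, s + k < nxt n (runStarts n π) s → π (s + k) = π s + k := by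
  intro k
  induction k with
  | zero => intro _; simp
  | succ k ih =>
    intro hk
    have hk' : s + k < nxt n (runStarts n π) s := by omega
    have ihv := ih hk'
    have hlt : s + k + 1 < n := by
      have := nxt_le_n n (runStarts n π) s; omega
    have hnot : s + k + 1 ∉ runStarts n π := by
      intro hmem
      have := nxt_le_of_mem (n := n) (s := s) hmem (by omega)
      omega
    simp only [runStarts, Finset.mem_filter, Finset.mem_range] at hnot
    push_neg at hnot
    have h2 := (hnot hlt).2
    have hsub : s + k + 1 - 1 = s + k := by omega
    rw [hsub, ihv] at h2
    show π (s + k + 1) = π s + (k + 1)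
    omega

lemma interval_mem {n : ℕ} {π : ℕ → ℕ} {s t : ℕ} (hs : s ∈ runStarts n π)
    (h1 : π s ≤ t) (h2 : t < π s + runLen n (runStarts n π) s) :
    ∃ k, s + k < nxt n (runStarts n π) s ∧ π (s + k) = t := by
  refine ⟨t - π s, ?_, ?_⟩
  · have := nxt_gt (runStarts n π) (mem_runStarts_lt hs)
    rw [runLen_eq] at h2; omega
  · rw [pi_run hs _ ?_]
    · omega
    · have := nxt_gt (runStarts n π) (mem_runStarts_lt hs)
      rw [runLen_eq] at h2; omega

lemma disj_filters {n : ℕ} {π : ℕ → ℕ} (hπ : Set.BijOn π (Set.Iio n) (Set.Iio n))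
    {s₁ s₂ : ℕ} (hs₁ : s₁ ∈ runStarts n π) (hs₂ : s₂ ∈ runStarts n π) (hne : s₁ ≠ s₂) :
    Disjoint
      ((runStarts n π).filter (fun t => π s₁ ≤ t ∧ t < π s₁ + runLen n (runStarts n π) s₁))
      ((runStarts n π).filter (fun t => π s₂ ≤ t ∧ t < π s₂ + runLen n (runStarts n π) s₂)) := by
  rw [Finset.disjoint_left]
  intro t ht1 ht2
  simp only [Finset.mem_filter] at ht1 ht2
  obtain ⟨k₁, hk₁, hp₁⟩ := interval_mem hs₁ ht1.2.1 ht1.2.2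
  obtain ⟨k₂, hk₂, hp₂⟩ := interval_mem hs₂ ht2.2.1 ht2.2.2
  have hn₁ : s₁ + k₁ < n := lt_of_lt_of_le hk₁ (nxt_le_n n _ s₁)
  have hn₂ : s₂ + k₂ < n := lt_of_lt_of_le hk₂ (nxt_le_n n _ s₂)
  have heq : s₁ + k₁ = s₂ + k₂ :=
    hπ.injOn hn₁ hn₂ (by rw [hp₁, hp₂])
  rcases lt_trichotomy s₁ s₂ with h | h | h
  · have := nxt_le_of_mem (n := n) hs₂ h
    omega
  · exact hne h
  · have := nxt_le_of_mem (n := n) hs₁ h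
    omega

lemma predIn_spec {n : ℕ} {π : ℕ → ℕ} (hn : 0 < n) {i : ℕ} (hi : i < n) :
    predIn (runStarts n π) i ∈ runStarts n π ∧ predIn (runStarts n π) i ≤ i ∧
      i < nxt n (runStarts n π) (predIn (runStarts n π) i) := by
  set S := runStarts n π
  have hne : {s : ℕ | s ∈ S ∧ s ≤ i}.Nonempty := ⟨0, zero_mem n π hn, Nat.zero_le _⟩
  have hbdd : BddAbove {s : ℕ | s ∈ S ∧ s ≤ i} := ⟨i, fun x hx => hx.2⟩
  have hmem : predIn S i ∈ {s : ℕ | s ∈ S ∧ s ≤ i} := Nat.sSup_mem hne hbdd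
  refine ⟨hmem.1, hmem.2, ?_⟩
  by_contra h
  push_neg at h
  rcases nxt_mem n S (predIn S i) with h' | h'
  · have hle : nxt n S (predIn S i) ≤ predIn S i :=
      le_csSup hbdd ⟨h'.1, h⟩
    have := nxt_gt S (lt_of_le_of_lt hmem.2 hi)
    omega
  · simp only [Set.mem_singleton_iff] at h'
    omega

end St3Aux

open St3Aux in
/-- The sum over all runs of `F(j)` is at most `r'`, and the total number of fast
forwards over all `n` distinct move queries is at most `L · r'`. -/
theorem statement_3 (n L : ℕ) (hn : 0 < n) (π : ℕ → ℕ)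
    (hπ : Set.BijOn π (Set.Iio n) (Set.Iio n))
    (hcap : ∀ s ∈ runStarts n π, runLen n (runStarts n π) s ≤ L) :
    (∑ s ∈ runStarts n π, ffCount n π (runStarts n π) s) ≤ (runStarts n π).card ∧
    (∑ i ∈ Finset.range n, ffCount n π (runStarts n π) (predIn (runStarts n π) i))
      ≤ L * (runStarts n π).card := by
  set S := runStarts n π with hS
  have part1 : (∑ s ∈ S, ffCount n π S s) ≤ S.card := by
    have hhe : ∑ s ∈ S, ffCount n π S s =
        (S.biUnion (fun s => S.filter
          (fun t => π s ≤ t ∧ t < π s + runLen n S s))).card := by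
      rw [Finset.card_biUnion]
      · rfl
      · intro x hx y hy hxy
        exact disj_filters hπ hx hy hxy
    rw [hhe]
    exact Finset.card_le_card (Finset.biUnion_subset.mpr
      (fun s _ => Finset.filter_subset _ _))
  refine ⟨part1, ?_⟩
  have hfib : ∑ s ∈ S, ∑ i ∈ (Finset.range n).filter (fun i => predIn S i = s),
      ffCount n π S (predIn S i)
      = ∑ i ∈ Finset.range n, ffCount n π S (predIn S i) := by
    apply Finset.sum_fiberwise_of_maps_to
    intro i hi
    exact (predIn_spec (π := π) hn (Finset.mem_range.mp hi)).1
  rw [← hfib]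
  have step : ∀ s ∈ S, ∑ i ∈ (Finset.range n).filter (fun i => predIn S i = s),
      ffCount n π S (predIn S i) ≤ L * ffCount n π S s := by
    intro s hs
    have hsum : ∑ i ∈ (Finset.range n).filter (fun i => predIn S i = s),
        ffCount n π S (predIn S i)
        = ((Finset.range n).filter (fun i => predIn S i = s)).card * ffCount n π S s := by
      rw [Finset.sum_congr rfl (fun i hi => by
        rw [(Finset.mem_filter.mp hi).2])]
      exact Finset.sum_const_nat (fun _ _ => rfl) |>.symm ▸ by
        simp [Finset.sum_const, smul_eq_mul]
    rw [hsum]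
    have hcard : ((Finset.range n).filter (fun i => predIn S i = s)).card ≤ L := by
      have hsub : (Finset.range n).filter (fun i => predIn S i = s) ⊆
          Finset.Ico s (nxt n S s) := by
        intro i hi
        obtain ⟨hi1, hi2⟩ := Finset.mem_filter.mp hi
        have := predIn_spec (π := π) hn (Finset.mem_range.mp hi1)
        rw [hi2] at this
        exact Finset.mem_Ico.mpr ⟨this.2.1, this.2.2⟩
      calc ((Finset.range n).filter (fun i => predIn S i = s)).card
          ≤ (Finset.Ico s (nxt n S s)).card := Finset.card_le_card hsub
        _ = nxt n S s - s := Nat.card_Ico _ _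
        _ = runLen n S s := (runLen_eq n S s).symm
        _ ≤ L := hcap s hs
    exact Nat.mul_le_mul_right _ hcard
  calc ∑ s ∈ S, ∑ i ∈ (Finset.range n).filter (fun i => predIn S i = s),
        ffCount n π S (predIn S i)
      ≤ ∑ s ∈ S, L * ffCount n π S s := Finset.sum_le_sum step
    _ = L * ∑ s ∈ S, ffCount n π S s := (Finset.mul_sum _ _ _).symm
    _ ≤ L * S.card := Nat.mul_le_mul_left _ part1
end

section
/- Let π be a permutation of {0,…,n−1} with r runs, length capped with constant c > 0 so that each run has length at most L = c·n/r and the number of runs is r' ≤ r + r/c. Then the total number of fast forwards over all n distinct move queries is at most L·r' ≤ c·n + n, hence the average number of fast forwards per query is at most c + 1. -/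
/-- Successor split point (or `n`). -/
noncomputable def nxt (n : ℕ) (S : Finset ℕ) (s : ℕ) : ℕ :=
  sInf ({t : ℕ | t ∈ S ∧ s < t} ∪ {n})

lemma runLen_eq (n : ℕ) (S : Finset ℕ) (s : ℕ) : runLen n S s = nxt n S s - s := rfl

lemma nxt_le (n : ℕ) (S : Finset ℕ) (s : ℕ) : nxt n S s ≤ n :=
  Nat.sInf_le (Or.inr rfl)

lemma nxt_mem (n : ℕ) (S : Finset ℕ) (s : ℕ) :
    nxt n S s ∈ ({t : ℕ | t ∈ S ∧ s < t} ∪ {n} : Set ℕ) :=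
  Nat.sInf_mem ⟨n, Or.inr rfl⟩

lemma lt_nxt (n : ℕ) (S : Finset ℕ) {s : ℕ} (hs : s < n) : s < nxt n S s := by
  rcases nxt_mem n S s with ⟨_, h⟩ | h
  · exact h
  · simpa [Set.mem_singleton_iff.mp h] using hs

lemma nxt_le_of_mem (n : ℕ) (S : Finset ℕ) {s t : ℕ} (ht : t ∈ S) (hst : s < t) :
    nxt n S s ≤ t :=
  Nat.sInf_le (Or.inl ⟨ht, hst⟩)

lemma zero_mem_runStarts {n : ℕ} (hn : 0 < n) (π : ℕ → ℕ) : 0 ∈ runStarts n π := by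
  simp [runStarts, hn]

section Pred

variable {S : Finset ℕ} (h0 : 0 ∈ S)

lemma predSet_bdd (i : ℕ) : BddAbove {s : ℕ | s ∈ S ∧ s ≤ i} :=
  ⟨i, fun _ hx => hx.2⟩

include h0

lemma predIn_mem (i : ℕ) : predIn S i ∈ S ∧ predIn S i ≤ i := by
  have hne : Set.Nonempty {s : ℕ | s ∈ S ∧ s ≤ i} := ⟨0, h0, Nat.zero_le i⟩
  exact Nat.sSup_mem hne (predSet_bdd i)

lemma predIn_eq_iff {n : ℕ} {i s : ℕ} (hi : i < n) (hs : s ∈ S) :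
    predIn S i = s ↔ s ≤ i ∧ i < nxt n S s := by
  constructor
  · rintro rfl
    refine ⟨(predIn_mem h0 i).2, ?_⟩
    by_contra h
    push_neg at h
    rcases nxt_mem n S (predIn S i) with ⟨hmem, hlt⟩ | hn'
    · have : nxt n S (predIn S i) ≤ predIn S i :=
        le_csSup (predSet_bdd i) ⟨hmem, h⟩
      omega
    · rw [Set.mem_singleton_iff] at hn'
      omega
  · rintro ⟨hsle, hlt⟩
    have h1 : s ≤ predIn S i := le_csSup (predSet_bdd i) ⟨hs, hsle⟩
    obtain ⟨hm, hle⟩ := predIn_mem h0 i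
    rcases eq_or_lt_of_le h1 with h | h
    · exact h.symm
    · exfalso
      have := nxt_le_of_mem n S hm h
      omega

end Pred

section Main

variable {n : ℕ} {π : ℕ → ℕ} {S' : Finset ℕ}
  (hsplit : runStarts n π ⊆ S') (hsub : S' ⊆ Finset.range n)

include hsplit hsub

/-- Within a piece, `π` is consecutive. -/
lemma pi_consecutive {s : ℕ} (hs : s ∈ S') :
    ∀ i, s ≤ i → i < nxt n S' s → π i = π s + (i - s) := by
  intro i
  induction i with
  | zero => intro h1 _; interval_cases s; simp
  | succ k ih =>
    intro h1 h2
    rcases Nat.lt_or_ge s (k+1) with hlt | hge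
    · have hk : s ≤ k := by omega
      have hπk : π k = π s + (k - s) := ih hk (by omega)
      have hkn : k + 1 < n := lt_of_lt_of_le h2 (nxt_le n S' s)
      have hns : k + 1 ∉ runStarts n π := by
        intro hmem
        have := nxt_le_of_mem n S' (hsplit hmem) hlt
        omega
      have hcond : ¬(k + 1 = 0 ∨ π (k + 1 - 1) + 1 ≠ π (k + 1)) := by
        intro h
        exact hns (Finset.mem_filter.mpr ⟨Finset.mem_range.mpr hkn, h⟩)
      push_neg at hcond
      have heq : π (k + 1 - 1) + 1 = π (k+1) := hcond.2
      simp only [Nat.add_sub_cancel] at heq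
      omega
    · have : s = k + 1 := by omega
      simp [this]

/-- The output interval is the image of the piece. -/
lemma out_eq_image {s : ℕ} (hs : s ∈ S') :
    (Finset.Ico s (nxt n S' s)).image π = Finset.Ico (π s) (π s + runLen n S' s) := by
  have hsn : s < n := Finset.mem_range.mp (hsub hs)
  have hlt := lt_nxt n S' hsn
  ext y
  simp only [Finset.mem_image, Finset.mem_Ico, runLen_eq]
  constructor
  · rintro ⟨i, ⟨h1, h2⟩, rfl⟩
    rw [pi_consecutive hsplit hsub hs i h1 h2]
    omega
  · rintro ⟨h1, h2⟩
    refine ⟨s + (y - π s), ⟨by omega, by omega⟩, ?_⟩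
    rw [pi_consecutive hsplit hsub hs (s + (y - π s)) (by omega) (by omega)]
    omega

/-- Output intervals of distinct pieces are disjoint. -/
lemma out_disjoint (hπ : Set.InjOn π (Set.Iio n)) {s t : ℕ} (hs : s ∈ S') (ht : t ∈ S')
    (hst : s ≠ t) :
    Disjoint (Finset.Ico (π s) (π s + runLen n S' s))
      (Finset.Ico (π t) (π t + runLen n S' t)) := by
  rw [← out_eq_image hsplit hsub hs, ← out_eq_image hsplit hsub ht]
  rw [Finset.disjoint_left]
  rintro y hy1 hy2
  simp only [Finset.mem_image, Finset.mem_Ico] at hy1 hy2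
  obtain ⟨i, ⟨hi1, hi2⟩, rfl⟩ := hy1
  obtain ⟨j, ⟨hj1, hj2⟩, hji⟩ := hy2
  have hin : i < n := lt_of_lt_of_le hi2 (nxt_le n S' s)
  have hjn : j < n := lt_of_lt_of_le hj2 (nxt_le n S' t)
  have hij : j = i := hπ hjn hin hji
  subst hij
  -- j lies in both pieces; pieces are disjoint
  rcases lt_or_gt_of_ne hst with h | h
  · have := nxt_le_of_mem n S' ht h; omega
  · have := nxt_le_of_mem n S' hs h; omega

end Main

/-- After length capping with constant `c` (each piece of length at most `L = c·n/r`,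
at most `r + r/c` pieces), the total number of fast forwards over all `n` distinct move
queries is at most `c·n + n`, hence at most `c + 1` per query on average. -/
theorem statement_4 (n L : ℕ) (hn : 0 < n) (c : ℝ) (hc : 0 < c) (π : ℕ → ℕ)
    (hπ : Set.BijOn π (Set.Iio n) (Set.Iio n))
    (S' : Finset ℕ)
    (hsplit : runStarts n π ⊆ S') (hsub : S' ⊆ Finset.range n)
    (hcap : ∀ s ∈ S', runLen n S' s ≤ L)
    (hLle : (L : ℝ) ≤ c * n / (runStarts n π).card)
    (hr' : (S'.card : ℝ) ≤ ((runStarts n π).card : ℝ) + ((runStarts n π).card : ℝ) / c) :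
    ((∑ i ∈ Finset.range n, ffCount n π S' (predIn S' i) : ℕ) : ℝ) ≤ c * n + n ∧
    ((∑ i ∈ Finset.range n, ffCount n π S' (predIn S' i) : ℕ) : ℝ) / n ≤ c + 1 := by
  have h0 : 0 ∈ S' := hsplit (zero_mem_runStarts hn π)
  -- Step 1: fiberwise decomposition of the sum
  have hmaps : ∀ i ∈ Finset.range n, predIn S' i ∈ S' := fun i _ => (predIn_mem h0 i).1
  have hfiber : ∀ s ∈ S',
      (Finset.range n).filter (fun i => predIn S' i = s) = Finset.Ico s (nxt n S' s) := by
    intro s hs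
    ext i
    simp only [Finset.mem_filter, Finset.mem_range, Finset.mem_Ico]
    constructor
    · rintro ⟨hi, hp⟩
      exact (predIn_eq_iff h0 hi hs).mp hp
    · rintro ⟨h1, h2⟩
      have hi : i < n := lt_of_lt_of_le h2 (nxt_le n S' s)
      exact ⟨hi, (predIn_eq_iff h0 hi hs).mpr ⟨h1, h2⟩⟩
  have hsum1 : ∑ i ∈ Finset.range n, ffCount n π S' (predIn S' i)
      = ∑ s ∈ S', runLen n S' s * ffCount n π S' s := by
    rw [← Finset.sum_fiberwise_of_maps_to hmaps (fun i => ffCount n π S' (predIn S' i))]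
    refine Finset.sum_congr rfl fun s hs => ?_
    have hconst : ∑ i ∈ (Finset.range n).filter (fun i => predIn S' i = s),
        ffCount n π S' (predIn S' i)
        = ∑ _i ∈ (Finset.range n).filter (fun i => predIn S' i = s), ffCount n π S' s :=
      Finset.sum_congr rfl fun i hi => by rw [(Finset.mem_filter.mp hi).2]
    rw [hconst, Finset.sum_const, hfiber s hs, Nat.card_Ico, smul_eq_mul, runLen_eq]
  -- Step 2: the output intervals are disjoint, so the ffCounts sum to at most S'.card
  have hffsum : ∑ s ∈ S', ffCount n π S' s ≤ S'.card := by
    have hdisj : ∀ s ∈ S', ∀ t ∈ S', s ≠ t →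
        Disjoint (S'.filter (fun u => π s ≤ u ∧ u < π s + runLen n S' s))
          (S'.filter (fun u => π t ≤ u ∧ u < π t + runLen n S' t)) := by
      intro s hs t ht hst
      have := out_disjoint hsplit hsub hπ.injOn hs ht hst
      refine Disjoint.mono ?_ ?_ this <;>
      · intro u hu
        simp only [Finset.mem_filter] at hu
        simp only [Finset.mem_Ico]
        exact hu.2
    calc ∑ s ∈ S', ffCount n π S' s
        = (S'.biUnion (fun s => S'.filter (fun u => π s ≤ u ∧ u < π s + runLen n S' s))).card :=
          (Finset.card_biUnion hdisj).symm
      _ ≤ S'.card := Finset.card_le_card (Finset.biUnion_subset.mpr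
          (fun s _ => Finset.filter_subset _ _))
  have htot : ∑ i ∈ Finset.range n, ffCount n π S' (predIn S' i) ≤ L * S'.card := by
    rw [hsum1]
    calc ∑ s ∈ S', runLen n S' s * ffCount n π S' s
        ≤ ∑ s ∈ S', L * ffCount n π S' s :=
          Finset.sum_le_sum fun s hs => Nat.mul_le_mul_right _ (hcap s hs)
      _ = L * ∑ s ∈ S', ffCount n π S' s := (Finset.mul_sum _ _ _).symm
      _ ≤ L * S'.card := Nat.mul_le_mul_left _ hffsum
  -- Step 3: numeric estimates
  set r : ℕ := (runStarts n π).card with hr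
  have hrpos : 0 < r := Finset.card_pos.mpr ⟨0, zero_mem_runStarts hn π⟩
  have hrR : (0:ℝ) < r := by exact_mod_cast hrpos
  have hnR : (0:ℝ) < n := by exact_mod_cast hn
  have h1 : ((∑ i ∈ Finset.range n, ffCount n π S' (predIn S' i) : ℕ) : ℝ)
      ≤ (L : ℝ) * (S'.card : ℝ) := by exact_mod_cast htot
  have h2 : (L : ℝ) * (S'.card : ℝ) ≤ (c * n / r) * ((r : ℝ) + (r : ℝ) / c) := by
    apply mul_le_mul hLle hr' (by positivity) (by positivity)
  have h3 : (c * n / r) * ((r : ℝ) + (r : ℝ) / c) = c * n + n := by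
    field_simp
  have hmain : ((∑ i ∈ Finset.range n, ffCount n π S' (predIn S' i) : ℕ) : ℝ) ≤ c * n + n := by
    calc _ ≤ (L : ℝ) * (S'.card : ℝ) := h1
      _ ≤ (c * n / r) * ((r : ℝ) + (r : ℝ) / c) := h2
      _ = c * n + n := h3
  refine ⟨hmain, ?_⟩
  rw [div_le_iff₀ hnR]
  nlinarith [hmain]
end

section
/- Let SA be the suffix array of a text T of length n with unique terminator, and define φ on {0,…,n−1} by φ(SA[i]) = SA[(i−1) mod n]. Then for any i with 0 ≤ i < n−1, if LF(i+1) = LF(i)+1, then φ(SA[i+1]) = φ(SA[i+1] − 1) + 1. Consequently, φ has at most r contiguously permuted runs, where r is the number of runs of the BWT. -/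
/-- If `LF(i+1) = LF(i) + 1` then `φ(SA[i+1]) = φ(SA[i+1] − 1) + 1` (arithmetic mod `n`
in `Fin n`); consequently `φ` has at most `r` contiguously permuted runs, where `r` is
the number of equal-character runs of the BWT. -/
theorem statement_7 {α : Type*} [DecidableEq α] (n : ℕ) [NeZero n]
    (SA : Equiv.Perm (Fin n)) (LF phi : Fin n → Fin n)
    (hLF : ∀ i : Fin n, SA (LF i) = SA i - 1)
    (hphi : ∀ i : Fin n, phi (SA i) = SA (i - 1))
    (BWT : Fin n → α)
    (hBWTrun : ∀ j : Fin n, j ≠ 0 → BWT (j - 1) = BWT j → LF j = LF (j - 1) + 1) :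
    (∀ i : Fin n, (i : ℕ) + 1 < n → LF (i + 1) = LF i + 1 →
      phi (SA (i + 1)) = phi (SA (i + 1) - 1) + 1) ∧
    (Finset.univ.filter (fun x : Fin n => phi (x - 1) + 1 ≠ phi x)).card ≤
      (Finset.univ.filter (fun j : Fin n => j = 0 ∨ BWT (j - 1) ≠ BWT j)).card := by
  constructor
  · intro i _ h1
    have h2 : SA (i + 1) - 1 = SA (LF (i + 1)) := (hLF (i + 1)).symm
    rw [hphi (i + 1), h2, hphi, h1, add_sub_cancel_right, add_sub_cancel_right,
      hLF i, sub_add_cancel]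
  · apply Finset.card_le_card_of_injOn (fun x => SA.symm x)
    · intro x hx
      simp only [Finset.coe_filter, Set.mem_setOf_eq, Finset.mem_filter, Finset.mem_univ, true_and] at hx ⊢
      by_contra hc
      push_neg at hc
      obtain ⟨h0, heq⟩ := hc
      apply hx
      have hstep := hBWTrun (SA.symm x) h0 heq
      have hx1 : x - 1 = SA (LF (SA.symm x)) := by
        rw [hLF]; simp
      rw [hx1, hphi, hstep, add_sub_cancel_right, hLF, ← hphi, sub_add_cancel,
        Equiv.apply_symm_apply]
    · intro a _ b _ h
      simpa using SA.symm.injective h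
end

section
/- Let π be a permutation of {0,…,n−1} with run-start set S of size r. The number of runs after length capping with parameter c, namely r' = Σ_{j} ⌈ℓ_j / L⌉ where ℓ_j are the run lengths and L = ⌈c·n/r⌉, satisfies r ≤ r' ≤ r + ⌊n/L⌋ ≤ r + r/c. -/
lemma sum_div_le_div_sum {r : ℕ} (a : Fin r → ℕ) (L : ℕ) :
    (∑ j, a j / L) ≤ (∑ j, a j) / L := by
  induction r with
  | zero => simp
  | succ m ih =>
    rw [Fin.sum_univ_succ, Fin.sum_univ_succ]
    calc a 0 / L + ∑ j : Fin m, a j.succ / L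
        ≤ a 0 / L + (∑ j : Fin m, a j.succ) / L := by
          exact Nat.add_le_add_left (ih _) _
      _ ≤ (a 0 + ∑ j : Fin m, a j.succ) / L := Nat.add_div_le_add_div _ _ _

/-- The number of runs after length capping with parameter `c`, namely
`r' = Σ_j ⌈ℓ_j / L⌉` with `L = ⌈c·n/r⌉`, satisfies `r ≤ r' ≤ r + ⌊n/L⌋ ≤ r + r/c`. -/
theorem statement_11 (n r : ℕ) (hn : 0 < n) (hr : 0 < r) (c : ℝ) (hc : 0 < c)
    (ℓ : Fin r → ℕ) (hpos : ∀ j, 0 < ℓ j) (hsum : (∑ j, ℓ j) = n)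
    (L : ℕ) (hL : L = ⌈c * n / r⌉₊) :
    r ≤ (∑ j, (ℓ j + L - 1) / L) ∧
    (∑ j, (ℓ j + L - 1) / L) ≤ r + n / L ∧
    ((∑ j, (ℓ j + L - 1) / L : ℕ) : ℝ) ≤ (r : ℝ) + (r : ℝ) / c := by
  have hcnr : (0:ℝ) < c * n / r := by positivity
  have hLpos : 0 < L := by rw [hL]; exact Nat.ceil_pos.2 hcnr
  have hterm : ∀ j, (ℓ j + L - 1) / L = 1 + (ℓ j - 1) / L := by
    intro j
    have := hpos j
    have h1 : ℓ j + L - 1 = (ℓ j - 1) + L := by omega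
    rw [h1, Nat.add_div_right _ hLpos]; omega
  have hsum' : (∑ j, (ℓ j + L - 1) / L) = r + ∑ j, (ℓ j - 1) / L := by
    simp [hterm, Finset.sum_add_distrib]
  have h2 : (∑ j, (ℓ j - 1) / L) ≤ n / L := by
    calc (∑ j, (ℓ j - 1) / L) ≤ (∑ j, (ℓ j - 1)) / L := sum_div_le_div_sum _ _
      _ ≤ n / L := Nat.div_le_div_right (by
          calc (∑ j, (ℓ j - 1)) ≤ ∑ j, ℓ j := Finset.sum_le_sum fun j _ => Nat.sub_le _ _
            _ = n := hsum)
  rw [hsum'] at *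
  refine ⟨Nat.le_add_right _ _, by omega, ?_⟩
  have h3 : ((n / L : ℕ) : ℝ) ≤ (r : ℝ) / c := by
    have hLge : c * n / r ≤ (L : ℝ) := by rw [hL]; exact Nat.le_ceil _
    have hL' : (0:ℝ) < L := by exact_mod_cast hLpos
    have h4 : ((n / L : ℕ) : ℝ) ≤ (n : ℝ) / L :=
      Nat.cast_div_le
    calc ((n / L : ℕ) : ℝ) ≤ (n : ℝ) / L := h4
      _ ≤ (n : ℝ) / (c * n / r) := by
          apply div_le_div_of_nonneg_left (by positivity) hcnr hLge
      _ = (r : ℝ) / c := by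
          field_simp
  have h5 : r + (∑ j, (ℓ j - 1) / L) ≤ r + n / L := by omega
  calc ((r + ∑ j, (ℓ j - 1) / L : ℕ) : ℝ) ≤ ((r + n / L : ℕ) : ℝ) := by exact_mod_cast h5
    _ = (r : ℝ) + ((n / L : ℕ) : ℝ) := by push_cast; ring
    _ ≤ (r : ℝ) + (r : ℝ) / c := by linarith
end

section
/- Brown–Gagie–Rossi worst case: there exists, for infinitely many n, a permutation π of {0,…,n−1} with r ∈ Θ(√n) runs (formed from a single cycle) such that the total number of fast forwards over all n distinct move queries of the unbalanced move structure is Θ(n·r), i.e., the average cost per query is Θ(r). -/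
/-- Rank (number of run starts `≤ x`). -/
def rankIn (S : Finset ℕ) (x : ℕ) : ℕ :=
  (S.filter (fun s => s ≤ x)).card

/-- Fast forwards of the move query at position `i` in the unbalanced move structure:
the scan distance from the rank of the predecessor of the run-start image to the rank
of the predecessor of `π i`. -/
noncomputable def ffQuery (n : ℕ) (π : ℕ → ℕ) (i : ℕ) : ℕ :=
  rankIn (runStarts n π) (π i) - rankIn (runStarts n π) (π (predIn (runStarts n π) i))

def bgrTau (m j : ℕ) : ℕ := if j % 2 = 1 then j - 1 else if j = m - 2 then 1 else j + 3

def bgrG (m u : ℕ) : ℕ := if u % 2 = 0 then u else if u = m - 1 then 1 else u + 2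

def bgrPi (m i : ℕ) : ℕ := if i < m then m^2 - m + bgrTau m i else i - m

lemma bgrTau_lt {m : ℕ} (hm : 6 ≤ m) (hme : m % 2 = 0) : ∀ j < m, bgrTau m j < m := by
  intro j hj; unfold bgrTau; split_ifs <;> omega

lemma bgrG_lt {m : ℕ} (hm : 6 ≤ m) (hme : m % 2 = 0) : ∀ u < m, bgrG m u < m := by
  intro u hu; unfold bgrG; split_ifs <;> omega

lemma bgrTau_g {m : ℕ} (hm : 6 ≤ m) (hme : m % 2 = 0) (u : ℕ) (hu : u + 1 < m) :
    bgrTau m (bgrG m u) = bgrG m (u + 1) := by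
  unfold bgrTau bgrG; split_ifs <;> omega

lemma bgrTau_g_last {m : ℕ} (hm : 6 ≤ m) (hme : m % 2 = 0) :
    bgrTau m (bgrG m (m - 1)) = 0 := by
  unfold bgrTau bgrG; split_ifs <;> omega

lemma bgrG_surj {m : ℕ} (hm : 6 ≤ m) (hme : m % 2 = 0) : ∀ t < m, ∃ u < m, bgrG m u = t := by
  intro t ht
  rcases Nat.even_or_odd t with ⟨c, hc⟩ | ⟨c, hc⟩
  · exact ⟨t, ht, by unfold bgrG; split_ifs <;> omega⟩
  · rcases eq_or_ne t 1 with rfl | h1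
    · exact ⟨m - 1, by omega, by unfold bgrG; split_ifs <;> omega⟩
    · exact ⟨t - 2, by omega, by unfold bgrG; split_ifs <;> omega⟩

lemma bgrTau_surj {m : ℕ} (hm : 6 ≤ m) (hme : m % 2 = 0) : ∀ s < m, ∃ t < m, bgrTau m t = s := by
  intro s hs
  obtain ⟨u, hu, hgu⟩ := bgrG_surj hm hme s hs
  rcases eq_or_ne u 0 with rfl | h0
  · exact ⟨bgrG m (m - 1), bgrG_lt hm hme _ (by omega), by
      rw [bgrTau_g_last hm hme, ← hgu]; rfl⟩
  · refine ⟨bgrG m (u - 1), bgrG_lt hm hme _ (by omega), ?_⟩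
    rw [bgrTau_g hm hme (u - 1) (by omega), show u - 1 + 1 = u by omega, hgu]

lemma bgrPi_iter_sub {m : ℕ} (hm : 6 ≤ m) : ∀ q x, q * m ≤ x → x < m ^ 2 →
    (bgrPi m)^[q] x = x - q * m := by
  intro q
  induction q with
  | zero => intro x _ _; simp
  | succ q ih =>
    intro x hqx hx
    have hmul : (q + 1) * m = q * m + m := by ring
    rw [Function.iterate_succ_apply]
    have h1 : bgrPi m x = x - m := by unfold bgrPi; rw [if_neg (by omega)]
    rw [h1, ih (x - m) (by omega) (by omega)]
    omega

lemma bgrPi_iter_m {m : ℕ} (hm : 6 ≤ m) (hme : m % 2 = 0) (t : ℕ) (ht : t < m) :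
    (bgrPi m)^[m] t = bgrTau m t := by
  have htau := bgrTau_lt hm hme t ht
  have h1 : bgrPi m t = m ^ 2 - m + bgrTau m t := by unfold bgrPi; rw [if_pos ht]
  have hsq : m ^ 2 = m * m := sq m
  have h3 : (m - 1) * m + m = m * m := by
    obtain ⟨k, rfl⟩ : ∃ k, m = k + 1 := ⟨m - 1, by omega⟩
    simp only [Nat.add_sub_cancel]
    ring
  rw [show (bgrPi m)^[m] t = (bgrPi m)^[m - 1] (bgrPi m t) from by
    rw [← Function.iterate_succ_apply]; congr 1; omega]
  rw [h1, bgrPi_iter_sub hm (m - 1) _ (by omega) (by omega)]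
  omega

/-- Reachability relation. -/
def bgrReach (m x y : ℕ) : Prop := ∃ k, (bgrPi m)^[k] x = y

lemma bgrReach_refl (m x : ℕ) : bgrReach m x x := ⟨0, rfl⟩

lemma bgrReach_trans {m x y z : ℕ} (h1 : bgrReach m x y) (h2 : bgrReach m y z) :
    bgrReach m x z := by
  obtain ⟨a, ha⟩ := h1; obtain ⟨b, hb⟩ := h2
  exact ⟨b + a, by rw [Function.iterate_add_apply, ha, hb]⟩

lemma bgrReach_tau {m : ℕ} (hm : 6 ≤ m) (hme : m % 2 = 0) {t : ℕ} (ht : t < m) :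
    bgrReach m t (bgrTau m t) := ⟨m, bgrPi_iter_m hm hme t ht⟩

lemma bgrReach_g_step {m : ℕ} (hm : 6 ≤ m) (hme : m % 2 = 0) :
    ∀ d u, u + d < m → bgrReach m (bgrG m u) (bgrG m (u + d)) := by
  intro d
  induction d with
  | zero => intro u _; exact bgrReach_refl m _
  | succ d ih =>
    intro u hu
    refine bgrReach_trans (bgrReach_tau hm hme (bgrG_lt hm hme u (by omega))) ?_
    rw [bgrTau_g hm hme u (by omega)]
    have := ih (u + 1) (by omega)
    rwa [show u + 1 + d = u + (d + 1) by omega] at this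

lemma bgrG_zero (m : ℕ) : bgrG m 0 = 0 := by unfold bgrG; norm_num

lemma bgrReach_g_zero {m : ℕ} (hm : 6 ≤ m) (hme : m % 2 = 0) {u : ℕ} (hu : u < m) :
    bgrReach m (bgrG m u) 0 := by
  refine bgrReach_trans (bgrReach_g_step hm hme (m - 1 - u) u (by omega)) ?_
  have h := bgrReach_tau hm hme (bgrG_lt hm hme (m - 1) (by omega))
  rw [bgrTau_g_last hm hme] at h
  rw [show u + (m - 1 - u) = m - 1 by omega]
  exact h

lemma bgrReach_zero_g {m : ℕ} (hm : 6 ≤ m) (hme : m % 2 = 0) {v : ℕ} (hv : v < m) :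
    bgrReach m 0 (bgrG m v) := by
  have h := bgrReach_g_step hm hme v 0 (by omega)
  rwa [bgrG_zero, zero_add] at h

lemma bgrReach_lt_lt {m : ℕ} (hm : 6 ≤ m) (hme : m % 2 = 0) {t₁ t₂ : ℕ}
    (h1 : t₁ < m) (h2 : t₂ < m) : bgrReach m t₁ t₂ := by
  obtain ⟨u, hu, rfl⟩ := bgrG_surj hm hme t₁ h1
  obtain ⟨v, hv, rfl⟩ := bgrG_surj hm hme t₂ h2
  exact bgrReach_trans (bgrReach_g_zero hm hme hu) (bgrReach_zero_g hm hme hv)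

lemma bgrReach_to_mod {m : ℕ} (hm : 6 ≤ m) {x : ℕ} (hx : x < m ^ 2) :
    bgrReach m x (x % m) := by
  have hd := Nat.div_add_mod x m
  have hcomm : x / m * m = m * (x / m) := by ring
  have hq : x / m * m ≤ x := by omega
  exact ⟨x / m, by rw [bgrPi_iter_sub hm _ _ hq hx]; omega⟩

lemma bgrReach_from_lt {m : ℕ} (hm : 6 ≤ m) (hme : m % 2 = 0) {y : ℕ} (hy : y < m ^ 2) :
    ∃ t < m, bgrReach m t y := by
  rcases lt_or_ge y m with h | h
  · exact ⟨y, h, bgrReach_refl m y⟩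
  · set s := y % m with hs
    have hsm : s < m := Nat.mod_lt _ (by omega)
    obtain ⟨t, ht, htau⟩ := bgrTau_surj hm hme s hsm
    have hstep : bgrPi m t = m ^ 2 - m + s := by
      unfold bgrPi; rw [if_pos ht, htau]
    set c := y / m with hc
    have hd : m * c + s = y := Nat.div_add_mod y m
    have hsq : m ^ 2 = m * m := sq m
    have hcm' : c < m := by by_contra hcon; push_neg at hcon; nlinarith
    have hcm : c ≤ m - 1 := by omega
    have hkey : (m - 1 - c) * m + c * m = (m - 1) * m := by
      rw [← Nat.add_mul]; congr 1; omega
    have hw1 : (m - 1) * m + m = m * m := by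
      obtain ⟨k, rfl⟩ : ∃ k, m = k + 1 := ⟨m - 1, by omega⟩
      simp only [Nat.add_sub_cancel]; ring
    refine ⟨t, ht, bgrReach_trans ⟨1, by simpa using hstep⟩ ⟨m - 1 - c, ?_⟩⟩
    rw [bgrPi_iter_sub hm (m - 1 - c) _ (by omega) (by omega)]
    have hcm2 : c * m = m * c := by ring
    omega

lemma bgr_single_cycle {m : ℕ} (hm : 6 ≤ m) (hme : m % 2 = 0) :
    ∀ x < m ^ 2, ∀ y < m ^ 2, ∃ k, (bgrPi m)^[k] x = y := by
  intro x hx y hy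
  obtain ⟨t, ht, hty⟩ := bgrReach_from_lt hm hme hy
  exact bgrReach_trans (bgrReach_to_mod hm hx)
    (bgrReach_trans (bgrReach_lt_lt hm hme (Nat.mod_lt _ (by omega)) ht) hty)

lemma bgrTau_inj {m : ℕ} (hm : 6 ≤ m) (hme : m % 2 = 0) {a b : ℕ} (ha : a < m) (hb : b < m)
    (h : bgrTau m a = bgrTau m b) : a = b := by
  unfold bgrTau at h; split_ifs at h <;> omega

lemma bgr_bijOn {m : ℕ} (hm : 6 ≤ m) (hme : m % 2 = 0) :
    Set.BijOn (bgrPi m) (Set.Iio (m ^ 2)) (Set.Iio (m ^ 2)) := by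
  have hsq : m ^ 2 = m * m := sq m
  have hmle : m ≤ m * m := Nat.le_mul_of_pos_left m (by omega)
  refine ⟨?_, ?_, ?_⟩
  · intro x hx
    simp only [Set.mem_Iio] at hx ⊢
    unfold bgrPi
    split_ifs with h
    · have := bgrTau_lt hm hme x h; omega
    · omega
  · intro a ha b hb hab
    simp only [Set.mem_Iio] at ha hb
    unfold bgrPi at hab
    split_ifs at hab with h1 h2 h2
    · have t1 := bgrTau_lt hm hme a h1
      have t2 := bgrTau_lt hm hme b h2
      exact bgrTau_inj hm hme h1 h2 (by omega)
    · have t1 := bgrTau_lt hm hme a h1; omega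
    · have t2 := bgrTau_lt hm hme b h2; omega
    · omega
  · intro y hy
    simp only [Set.mem_Iio] at hy
    rcases lt_or_ge y (m ^ 2 - m) with h | h
    · refine ⟨y + m, by simp only [Set.mem_Iio]; omega, ?_⟩
      unfold bgrPi; rw [if_neg (by omega)]; omega
    · obtain ⟨t, ht, htau⟩ := bgrTau_surj hm hme (y - (m ^ 2 - m)) (by omega)
      refine ⟨t, by simp only [Set.mem_Iio]; omega, ?_⟩
      unfold bgrPi; rw [if_pos ht, htau]; omega

lemma bgrTau_no_ascent {m : ℕ} (hm : 6 ≤ m) (hme : m % 2 = 0) {i : ℕ} (h1 : 1 ≤ i)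
    (h2 : i < m) : bgrTau m (i - 1) + 1 ≠ bgrTau m i := by
  unfold bgrTau; split_ifs <;> omega

lemma bgr_runStarts {m : ℕ} (hm : 6 ≤ m) (hme : m % 2 = 0) :
    runStarts (m ^ 2) (bgrPi m) = Finset.range (m + 1) := by
  have hsq : m ^ 2 = m * m := sq m
  have hmle : m ≤ m * m := Nat.le_mul_of_pos_left m (by omega)
  have hmlt : m < m * m := by nlinarith
  ext i
  simp only [runStarts, Finset.mem_filter, Finset.mem_range]
  constructor
  · rintro ⟨hi, h0 | hne⟩
    · omega
    · by_contra hcon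
      push_neg at hcon
      apply hne
      unfold bgrPi
      rw [if_neg (by omega), if_neg (by omega)]
      omega
  · intro hi
    refine ⟨by omega, ?_⟩
    rcases eq_or_ne i 0 with rfl | h0
    · exact Or.inl rfl
    right
    rcases eq_or_ne i m with rfl | him
    · unfold bgrPi
      rw [if_pos (by omega), if_neg (by omega)]
      have hτ : bgrTau i (i - 1) = i - 2 := by
        unfold bgrTau; split_ifs <;> omega
      rw [hτ]
      omega
    · unfold bgrPi
      rw [if_pos (by omega), if_pos (by omega)]
      have := bgrTau_no_ascent hm hme (show 1 ≤ i by omega) (show i < m by omega)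
      have t1 := bgrTau_lt hm hme (i - 1) (by omega)
      have t2 := bgrTau_lt hm hme i (by omega)
      omega

lemma bgr_rank {m x : ℕ} : rankIn (Finset.range (m + 1)) x = min x m + 1 := by
  unfold rankIn
  rw [show (Finset.range (m + 1)).filter (fun s => s ≤ x) = Finset.range (min x m + 1) from by
    ext a; simp only [Finset.mem_filter, Finset.mem_range]; omega]
  exact Finset.card_range _

lemma bgr_pred {m i : ℕ} : predIn (Finset.range (m + 1)) i = min i m := by
  unfold predIn
  rw [show {s : ℕ | s ∈ Finset.range (m + 1) ∧ s ≤ i} = Set.Iic (min i m) from by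
    ext s; simp only [Finset.mem_range, Set.mem_Iic, Set.mem_setOf_eq]; omega]
  exact csSup_Iic

lemma bgr_ff_small {m i : ℕ} (hm : 6 ≤ m) (hme : m % 2 = 0) (hi : i < m) :
    ffQuery (m ^ 2) (bgrPi m) i = 0 := by
  unfold ffQuery
  rw [bgr_runStarts hm hme, bgr_pred, show min i m = i by omega, Nat.sub_self]

lemma bgr_ff_big {m i : ℕ} (hm : 6 ≤ m) (hme : m % 2 = 0) (h1 : m ≤ i) (h2 : i < m ^ 2) :
    ffQuery (m ^ 2) (bgrPi m) i = min (i - m) m := by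
  unfold ffQuery
  rw [bgr_runStarts hm hme, bgr_pred, show min i m = m by omega]
  rw [show bgrPi m m = 0 from by unfold bgrPi; rw [if_neg (by omega)]; omega]
  rw [show bgrPi m i = i - m from by unfold bgrPi; rw [if_neg (by omega)]]
  rw [bgr_rank, bgr_rank]
  omega

lemma bgr_sum_lower {m : ℕ} (hm : 6 ≤ m) (hme : m % 2 = 0) :
    (m ^ 2 - 2 * m) * m ≤ ∑ i ∈ Finset.range (m ^ 2), ffQuery (m ^ 2) (bgrPi m) i := by
  have hsq : m ^ 2 = m * m := sq m
  have h1 : ∑ i ∈ Finset.Ico (2 * m) (m ^ 2), ffQuery (m ^ 2) (bgrPi m) i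
      = (m ^ 2 - 2 * m) * m := by
    rw [Finset.sum_congr rfl (fun i hi => ?_), Finset.sum_const, Nat.card_Ico, smul_eq_mul]
    · rw [Finset.mem_Ico] at hi
      rw [bgr_ff_big hm hme (by omega) (by omega)]
      omega
  rw [← h1]
  apply Finset.sum_le_sum_of_subset
  intro i hi
  rw [Finset.mem_Ico] at hi
  rw [Finset.mem_range]
  omega

lemma bgr_sum_upper {m : ℕ} (hm : 6 ≤ m) (hme : m % 2 = 0) :
    ∑ i ∈ Finset.range (m ^ 2), ffQuery (m ^ 2) (bgrPi m) i ≤ m ^ 2 * m := by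
  calc ∑ i ∈ Finset.range (m ^ 2), ffQuery (m ^ 2) (bgrPi m) i
      ≤ ∑ _i ∈ Finset.range (m ^ 2), m := by
        apply Finset.sum_le_sum
        intro i hi
        rw [Finset.mem_range] at hi
        rcases lt_or_ge i m with h | h
        · rw [bgr_ff_small hm hme h]; omega
        · rw [bgr_ff_big hm hme h hi]; omega
    _ = m ^ 2 * m := by rw [Finset.sum_const, Finset.card_range, smul_eq_mul]

/-- Brown–Gagie–Rossi worst case: for infinitely many `n` there is a single-cycle
permutation with `r ∈ Θ(√n)` runs whose total fast-forward count over all `n` distinct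
move queries is `Θ(n·r)`. -/
theorem statement_17 :
    ∃ C₁ C₂ C₃ C₄ : ℝ, 0 < C₁ ∧ 0 < C₂ ∧ 0 < C₃ ∧ 0 < C₄ ∧
      ∀ N : ℕ, ∃ n : ℕ, N < n ∧ ∃ π : ℕ → ℕ,
        Set.BijOn π (Set.Iio n) (Set.Iio n) ∧
        (∀ x < n, ∀ y < n, ∃ k : ℕ, π^[k] x = y) ∧
        C₁ * Real.sqrt n ≤ ((runStarts n π).card : ℝ) ∧
        ((runStarts n π).card : ℝ) ≤ C₂ * Real.sqrt n ∧
        C₃ * n * ((runStarts n π).card : ℝ)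
          ≤ ((∑ i ∈ Finset.range n, ffQuery n π i : ℕ) : ℝ) ∧
        ((∑ i ∈ Finset.range n, ffQuery n π i : ℕ) : ℝ)
          ≤ C₄ * n * ((runStarts n π).card : ℝ) := by
  refine ⟨1, 2, 1/4, 1, one_pos, two_pos, by norm_num, one_pos, fun N => ?_⟩
  set m : ℕ := 2 * N + 6 with hmdef
  have hm : 6 ≤ m := by omega
  have hme : m % 2 = 0 := by omega
  have hmle : m ≤ m * m := Nat.le_mul_of_pos_left m (by omega)
  have hsq : m ^ 2 = m * m := sq m
  refine ⟨m ^ 2, by omega, bgrPi m, bgr_bijOn hm hme, bgr_single_cycle hm hme, ?_⟩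
  have hM6 : (6 : ℝ) ≤ (m : ℝ) := by exact_mod_cast hm
  have hcard : (runStarts (m ^ 2) (bgrPi m)).card = m + 1 := by
    rw [bgr_runStarts hm hme, Finset.card_range]
  have hsqrt : Real.sqrt ((m ^ 2 : ℕ) : ℝ) = (m : ℝ) := by
    rw [show ((m ^ 2 : ℕ) : ℝ) = (m : ℝ) ^ 2 by push_cast; ring,
      Real.sqrt_sq (by positivity)]
  rw [hcard, hsqrt]
  have hcast : ((m + 1 : ℕ) : ℝ) = (m : ℝ) + 1 := by push_cast; ring
  have hncast : ((m ^ 2 : ℕ) : ℝ) = (m : ℝ) ^ 2 := by push_cast; ring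
  refine ⟨by rw [hcast]; linarith, by rw [hcast]; linarith, ?_, ?_⟩
  · have hlow := bgr_sum_lower hm hme
    have hlow' : (((m ^ 2 - 2 * m) * m : ℕ) : ℝ)
        ≤ ((∑ i ∈ Finset.range (m ^ 2), ffQuery (m ^ 2) (bgrPi m) i : ℕ) : ℝ) :=
      Nat.cast_le.mpr hlow
    have h2m : 2 * m ≤ m ^ 2 := by nlinarith
    have hcast2 : (((m ^ 2 - 2 * m) * m : ℕ) : ℝ) = ((m : ℝ) ^ 2 - 2 * m) * m := by
      push_cast [Nat.cast_sub h2m]; ring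
    rw [hcast2] at hlow'
    refine le_trans ?_ hlow'
    rw [hcast, hncast]
    nlinarith
  · have hup := bgr_sum_upper hm hme
    have hup' : ((∑ i ∈ Finset.range (m ^ 2), ffQuery (m ^ 2) (bgrPi m) i : ℕ) : ℝ)
        ≤ ((m ^ 2 * m : ℕ) : ℝ) := Nat.cast_le.mpr hup
    refine le_trans hup' ?_
    rw [hcast, hncast]
    push_cast
    nlinarith
end

section
/- Let π be a permutation of {0,…,n−1} and let S' ⊇ S be any superset of the run starts of π obtained by splitting runs (so positions in each piece of S' still permute contiguously). Then the predecessor-based evaluation remains correct: for any i, letting i' be the largest element of S' with i' ≤ i, π(i) = π(i') + (i − i'). -/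
/-- Predecessor-based evaluation remains correct for any superset `S'` of the run
starts (i.e. after arbitrarily splitting runs): for `i' = max {s ∈ S' : s ≤ i}`,
`π i = π i' + (i − i')`. -/
theorem statement_19 (n : ℕ) (hn : 0 < n) (π : ℕ → ℕ)
    (hπ : Set.BijOn π (Set.Iio n) (Set.Iio n))
    (S' : Finset ℕ) (hsup : runStarts n π ⊆ S') (hsub : S' ⊆ Finset.range n)
    (i : ℕ) (hi : i < n) (i' : ℕ)
    (hi'S : i' ∈ S') (hi'le : i' ≤ i)
    (hmax : ∀ s ∈ S', s ≤ i → s ≤ i') :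
    π i = π i' + (i - i') := by
  have key : ∀ j, i' ≤ j → j ≤ i → π j = π i' + (j - i') := by
    intro j
    induction j with
    | zero => intro h1 _; interval_cases i' <;> simp
    | succ k ih =>
      intro h1 h2
      rcases Nat.lt_or_ge i' (k + 1) with hlt | hge
      · have hik : i' ≤ k := Nat.lt_succ_iff.mp hlt
        have hk := ih hik (le_trans (Nat.le_succ k) h2)
        have hns : k + 1 ∉ S' := by
          intro hmem
          exact absurd (hmax _ hmem h2) (by omega)
        have hnr : k + 1 ∉ runStarts n π := fun h => hns (hsup h)
        have hstep : π k + 1 = π (k + 1) := by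
          by_contra hne
          exact hnr (by
            simp only [runStarts, Finset.mem_filter, Finset.mem_range]
            refine ⟨by omega, Or.inr ?_⟩
            simpa using hne)
        omega
      · have : i' = k + 1 := le_antisymm h1 hge
        simp [this]
  exact key i hi'le le_rfl
end
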